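/- Let (g, B) be a quadratic Lie algebra and let D be a skew-symmetric derivation of (g, B). Define the double extension ḡ = g ⊕ ℂe ⊕ ℂf with bracket [X,Y]_ḡ = [X,Y]_g + B(D(X),Y)·f, [e,X]_ḡ = D(X), [f, ḡ]_ḡ = 0 for X,Y ∈ g, and bilinear form B̄ extending B with B̄(e,f)=1, B̄(e,e)=B̄(f,f)=B̄(e,g)=B̄(f,g)=0. Then ḡ is a Lie algebra and B̄ is a non-degenerate invariant symmetric bilinear form on ḡ; that is, (ḡ, B̄) is a quadratic Lie algebra. -/
import Mathlib


/-- The one-dimensional double extension of a quadratic Lie algebra `(g,B)`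
by a skew-symmetric derivation `D` is again a quadratic Lie algebra.  Elements of
`ḡ = g ⊕ ℂe ⊕ ℂf` are encoded as triples `(X, a, b) = X + a·e + b·f`. -/
theorem stmt_4 (L : Type*) [LieRing L] [LieAlgebra ℂ L] [FiniteDimensional ℂ L]
    (B : L →ₗ[ℂ] L →ₗ[ℂ] ℂ)
    (hsymm : ∀ x y : L, B x y = B y x)
    (hnondeg : ∀ x : L, (∀ y : L, B x y = 0) → x = 0)
    (hinv : ∀ x y z : L, B ⁅x, y⁆ z = B x ⁅y, z⁆)
    (D : L →ₗ[ℂ] L)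
    (hder : ∀ x y : L, D ⁅x, y⁆ = ⁅D x, y⁆ + ⁅x, D y⁆)
    (hskew : ∀ x y : L, B (D x) y = - B x (D y))
    (br : L × ℂ × ℂ → L × ℂ × ℂ → L × ℂ × ℂ)
    (hbr : ∀ u v, br u v =
      (⁅u.1, v.1⁆ + u.2.1 • D v.1 - v.2.1 • D u.1, 0, B (D u.1) v.1))
    (Bb : L × ℂ × ℂ → L × ℂ × ℂ → ℂ)
    (hBb : ∀ u v, Bb u v = B u.1 v.1 + u.2.1 * v.2.2 + u.2.2 * v.2.1) :
    -- the bracket is bilinear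
    (∀ (c : ℂ) (u u' v : L × ℂ × ℂ), br (c • u + u') v = c • br u v + br u' v) ∧
    -- antisymmetric
    (∀ u v, br u v = - br v u) ∧
    -- satisfies the Jacobi identity (Leibniz form)
    (∀ u v w, br u (br v w) = br (br u v) w + br v (br u w)) ∧
    -- B̄ is symmetric
    (∀ u v, Bb u v = Bb v u) ∧
    -- non-degenerate
    (∀ u, (∀ v, Bb u v = 0) → u = 0) ∧
    -- invariant
    (∀ u v w, Bb (br u v) w = Bb u (br v w)) := by
  refine ⟨?_, ?_, ?_, ?_, ?_, ?_⟩
  · intro c u u' v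
    obtain ⟨x, a, p⟩ := u; obtain ⟨x', a', p'⟩ := u'; obtain ⟨y, b, q⟩ := v
    simp only [hbr, Prod.smul_mk, Prod.mk_add_mk, smul_eq_mul, Prod.mk.injEq]
    refine ⟨?_, ?_, ?_⟩
    · simp only [add_lie, smul_lie, map_add, map_smul, smul_add, smul_sub, smul_smul]
      module
    · ring
    · simp only [map_add, map_smul, LinearMap.add_apply, LinearMap.smul_apply,
        smul_eq_mul]
  · intro u v
    obtain ⟨x, a, p⟩ := u; obtain ⟨y, b, q⟩ := v
    simp only [hbr, Prod.neg_mk, Prod.mk.injEq]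
    refine ⟨?_, ?_, ?_⟩
    · rw [← lie_skew x y]; module
    · ring
    · linear_combination hskew x y + hsymm (D y) x
  · intro u v w
    obtain ⟨x, a, p⟩ := u; obtain ⟨y, b, q⟩ := v; obtain ⟨z, c, r⟩ := w
    simp only [hbr, Prod.mk_add_mk, Prod.mk.injEq]
    refine ⟨?_, ?_, ?_⟩
    · simp only [map_add, map_sub, map_smul, lie_add, add_lie, lie_sub, sub_lie,
        lie_smul, smul_lie, hder, smul_add, smul_sub, smul_smul, smul_zero, zero_smul,
        leibniz_lie x y z]
      rw [← lie_skew y (D x)]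
      module
    · ring
    · simp only [map_add, map_sub, map_smul, LinearMap.add_apply, LinearMap.sub_apply,
        LinearMap.smul_apply, smul_eq_mul, hder, smul_zero, zero_smul, map_zero, mul_zero]
      have e1 : B ⁅D x, y⁆ z = B (D x) ⁅y, z⁆ := hinv _ _ _
      have e2 : - B ⁅x, D y⁆ z = B (D y) ⁅x, z⁆ := by
        have h := hinv (D y) x z
        rw [(lie_skew (D y) x).symm, map_neg, LinearMap.neg_apply] at h
        exact h
      have e3 : B (D (D x)) z = - B (D x) (D z) := hskew (D x) z
      have e4 : B (D (D y)) z = - B (D y) (D z) := hskew (D y) z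
      have e5 : B (D x) (D y) = B (D y) (D x) := hsymm _ _
      linear_combination - e1 + e2 + b * e3 - a * e4 - c * e5
  · intro u v
    simp only [hBb, hsymm]; ring
  · intro u hu
    obtain ⟨x, a, b⟩ := u
    have h1 := hu (0, 0, 1)
    have h2 := hu (0, 1, 0)
    simp only [hBb] at h1 h2
    simp at h1 h2
    have hx : x = 0 := by
      apply hnondeg
      intro y
      have := hu (y, 0, 0)
      simp only [hBb] at this; simpa using this
    simp [hx, h1, h2]
  · intro u v w
    simp only [hBb, hbr, map_add, map_sub, map_smul, LinearMap.add_apply,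
      LinearMap.sub_apply, LinearMap.smul_apply, smul_eq_mul]
    have h1 : B ⁅u.1, v.1⁆ w.1 = B u.1 ⁅v.1, w.1⁆ := hinv _ _ _
    have h2 : B (D u.1) w.1 = - B u.1 (D w.1) := hskew _ _
    have h3 : B (D u.1) v.1 = - B u.1 (D v.1) := hskew _ _
    linear_combination h1 - v.2.1 * h2 + w.2.1 * h3
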